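/- Let R = Q/(g) where Q is a standard graded algebra and g ∈ Q_2 a non-zero-divisor, and suppose H_R(s) = (1+(e−1)s)(1+s) where e = dim_k R_1. If h ∈ Q_1 is a non-zero-divisor, then the module N = (Q/hQ)^p satisfies H_N(s) = p(1 + (e−1)s), and N admits a periodic-of-period-2 linear resolution over R; in particular the linear locus L_{p,(e−1)p}(R) is nonempty. -/

import Mathlib

open Module

namespace Stmt8Aux

variable {k Q : Type*} [Field k] [CommRing Q] [Algebra k Q]

section comp

variable (𝒜 : ℤ → Submodule k Q)

noncomputable def comp (hint : DirectSum.IsInternal 𝒜) (j : ℤ) : Q →ₗ[k] Q :=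
  (𝒜 j).subtype ∘ₗ (DirectSum.component k ℤ (fun i => 𝒜 i) j) ∘ₗ
    ((LinearEquiv.ofBijective (DirectSum.coeLinearMap 𝒜) hint).symm : Q →ₗ[k] _)

lemma comp_apply (hint : DirectSum.IsInternal 𝒜) (j : ℤ) (x : Q) :
    comp 𝒜 hint j x
      = ((LinearEquiv.ofBijective (DirectSum.coeLinearMap 𝒜) hint).symm x j : Q) := rfl

lemma comp_mem (hint : DirectSum.IsInternal 𝒜) (j : ℤ) (x : Q) : comp 𝒜 hint j x ∈ 𝒜 j := by
  rw [comp_apply]; exact SetLike.coe_mem _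

lemma comp_of_mem (hint : DirectSum.IsInternal 𝒜) {i : ℤ} {x : Q} (hx : x ∈ 𝒜 i) : comp 𝒜 hint i x = x := by
  rw [comp_apply, hint.ofBijective_coeLinearMap_of_mem hx]

lemma comp_of_mem_ne (hint : DirectSum.IsInternal 𝒜) {i j : ℤ} {x : Q} (hx : x ∈ 𝒜 i) (hij : i ≠ j) :
    comp 𝒜 hint j x = 0 := by
  rw [comp_apply, hint.ofBijective_coeLinearMap_of_mem_ne hij hx]; rfl

lemma comp_mul (hint : DirectSum.IsInternal 𝒜) (hm : ∀ ⦃i j : ℤ⦄ ⦃x y : Q⦄, x ∈ 𝒜 i → y ∈ 𝒜 j → x * y ∈ 𝒜 (i + j))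
    {d : ℤ} {r : Q} (hr : r ∈ 𝒜 d) (j : ℤ) (q : Q) :
    comp 𝒜 hint j (r * q) = r * comp 𝒜 hint (j - d) q := by
  have hq : q ∈ ⨆ i, 𝒜 i := by rw [hint.submodule_iSup_eq_top]; trivial
  refine Submodule.iSup_induction (motive := fun q => comp 𝒜 hint j (r * q) = r * comp 𝒜 hint (j - d) q) 𝒜 hq ?_ ?_ ?_
  · intro i x hx
    by_cases hij : d + i = j
    · subst hij
      have h1 : comp 𝒜 hint (d + i) (r * x) = r * x := comp_of_mem 𝒜 hint (hm hr hx)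
      have h2 : comp 𝒜 hint (d + i - d) x = x := by
        rw [show d + i - d = i by ring]; exact comp_of_mem 𝒜 hint hx
      rw [h1, h2]
    · rw [comp_of_mem_ne 𝒜 hint (hm hr hx) hij,
        comp_of_mem_ne 𝒜 hint hx (by omega), mul_zero]
  · simp
  · intro x y hx hy
    rw [mul_add, map_add, map_add, mul_add, hx, hy]

lemma mem_of_mul_mem (hint : DirectSum.IsInternal 𝒜) (hm : ∀ ⦃i j : ℤ⦄ ⦃x y : Q⦄, x ∈ 𝒜 i → y ∈ 𝒜 j → x * y ∈ 𝒜 (i + j))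
    {d : ℤ} {r : Q} (hr : r ∈ 𝒜 d) (hreg : ∀ x : Q, r * x = 0 → x = 0)
    {j : ℤ} {q : Q} (hmem : r * q ∈ 𝒜 j) : q ∈ 𝒜 (j - d) := by
  have h1 : r * comp 𝒜 hint (j - d) q = r * q := by
    rw [← comp_mul 𝒜 hint hm hr, comp_of_mem 𝒜 hint hmem]
  have h2 : r * (comp 𝒜 hint (j - d) q - q) = 0 := by rw [mul_sub, h1, sub_self]
  have h3 : comp 𝒜 hint (j - d) q = q := sub_eq_zero.mp (hreg _ h2)
  rw [← h3]; exact comp_mem 𝒜 hint _ _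

lemma finrank_map_quot (hint : DirectSum.IsInternal 𝒜) (hm : ∀ ⦃i j : ℤ⦄ ⦃x y : Q⦄, x ∈ 𝒜 i → y ∈ 𝒜 j → x * y ∈ 𝒜 (i + j))
    (hfd : ∀ i : ℤ, FiniteDimensional k (𝒜 i))
    {d : ℤ} {r : Q} (hr : r ∈ 𝒜 d) (hreg : ∀ x : Q, r * x = 0 → x = 0) (j : ℤ) :
    finrank k ((𝒜 j).map (((Ideal.span {r} : Ideal Q).mkQ).restrictScalars k))
      + finrank k (𝒜 (j - d)) = finrank k (𝒜 j) := by
  haveI := hfd j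
  set f : Q →ₗ[k] Q ⧸ (Ideal.span {r} : Ideal Q) :=
    ((Ideal.span {r} : Ideal Q).mkQ).restrictScalars k with hf
  have rn := LinearMap.finrank_range_add_finrank_ker (f.domRestrict (𝒜 j))
  rw [LinearMap.range_domRestrict] at rn
  have hkd : finrank k (LinearMap.ker (f.domRestrict (𝒜 j))) = finrank k (𝒜 (j - d)) := by
    have hmem2 : ∀ a : 𝒜 (j - d), (r * (a : Q)) ∈ 𝒜 j := by
      intro a
      have := hm hr a.2
      rwa [show d + (j - d) = j by ring] at this
    have hker2 : ∀ a : 𝒜 (j - d),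
        (⟨r * (a : Q), hmem2 a⟩ : 𝒜 j) ∈ LinearMap.ker (f.domRestrict (𝒜 j)) := by
      intro a
      simp only [LinearMap.mem_ker, LinearMap.domRestrict_apply, hf,
        LinearMap.coe_restrictScalars, Submodule.mkQ_apply, Submodule.Quotient.mk_eq_zero]
      exact Ideal.mem_span_singleton'.mpr ⟨(a : Q), mul_comm _ _⟩
    let F : 𝒜 (j - d) →ₗ[k] LinearMap.ker (f.domRestrict (𝒜 j)) :=
      { toFun := fun a => ⟨⟨r * (a : Q), hmem2 a⟩, hker2 a⟩
        map_add' := by intro a b; ext; simp [mul_add]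
        map_smul' := by intro c a; ext; simp [mul_smul_comm] }
    have hFinj : Function.Injective F := by
      intro a b hab
      have h1 : r * (a : Q) = r * (b : Q) :=
        congrArg (fun z : LinearMap.ker (f.domRestrict (𝒜 j)) => ((z : 𝒜 j) : Q)) hab
      have h2 : r * ((a : Q) - (b : Q)) = 0 := by rw [mul_sub, h1, sub_self]
      exact Subtype.ext (sub_eq_zero.mp (hreg _ h2))
    have hFsurj : Function.Surjective F := by
      rintro ⟨⟨x, hxj⟩, hx⟩
      have hx0 : x ∈ (Ideal.span {r} : Ideal Q) := by
        simpa only [LinearMap.mem_ker, LinearMap.domRestrict_apply, hf,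
          LinearMap.coe_restrictScalars, Submodule.mkQ_apply,
          Submodule.Quotient.mk_eq_zero] using hx
      obtain ⟨a, ha⟩ := Ideal.mem_span_singleton'.mp hx0
      have hra : r * a = x := by rw [mul_comm]; exact ha
      have haA : a ∈ 𝒜 (j - d) :=
        mem_of_mul_mem 𝒜 hint hm hr hreg (by rw [hra]; exact hxj)
      exact ⟨⟨a, haA⟩, Subtype.ext (Subtype.ext hra)⟩
    have := (LinearEquiv.ofBijective F ⟨hFinj, hFsurj⟩).finrank_eq
    exact this.symm
  rw [hkd] at rn
  exact rn

end comp

section pi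

variable {V : Type*} [AddCommGroup V] [Module k V]

def piEquiv (p : ℕ) (W : Submodule k V) :
    (Submodule.pi Set.univ (fun _ : Fin p => W)) ≃ₗ[k] (Fin p → W) where
  toFun x := fun i => ⟨x.1 i, x.2 i (Set.mem_univ i)⟩
  map_add' x y := rfl
  map_smul' c x := rfl
  invFun f := ⟨fun i => (f i : V), fun i _ => (f i).2⟩
  left_inv x := rfl
  right_inv f := rfl

lemma finrank_pi_submodule (p : ℕ) (W : Submodule k V) [FiniteDimensional k W] :
    finrank k (Submodule.pi Set.univ (fun _ : Fin p => W)) = p * finrank k W := by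
  rw [(piEquiv p W).finrank_eq, Module.finrank_pi_fintype]
  simp [Finset.sum_const]

lemma pi_eq_bot (p : ℕ) :
    Submodule.pi Set.univ (fun _ : Fin p => (⊥ : Submodule k V)) = ⊥ := by
  rw [eq_bot_iff]
  intro x hx
  have h := Submodule.mem_pi.mp hx
  simp only [Submodule.mem_bot] at h ⊢
  funext i
  exact h i (Set.mem_univ i)

end pi

section pmap

variable {A B C : Type*} [AddCommGroup A] [Module Q A] [AddCommGroup B] [Module Q B]
  [AddCommGroup C] [Module Q C]

def pmap (p : ℕ) (f : A →ₗ[Q] B) : (Fin p → A) →ₗ[Q] (Fin p → B) :=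
  LinearMap.pi fun i => f ∘ₗ LinearMap.proj i

@[simp] lemma pmap_apply (p : ℕ) (f : A →ₗ[Q] B) (x : Fin p → A) (i : Fin p) :
    pmap p f x i = f (x i) := rfl

lemma pmap_injective {p : ℕ} {f : A →ₗ[Q] B} (hf : Function.Injective f) :
    Function.Injective (pmap p f) := by
  intro x y hxy
  funext i
  exact hf (congrFun hxy i)

lemma pmap_surjective {p : ℕ} {f : A →ₗ[Q] B} (hf : Function.Surjective f) :
    Function.Surjective (pmap p f) := by
  intro y
  choose x hx using fun i => hf (y i)
  exact ⟨x, funext hx⟩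

lemma pmap_exact {p : ℕ} {f : A →ₗ[Q] B} {g : B →ₗ[Q] C} (hfg : Function.Exact f g) :
    Function.Exact (pmap p f) (pmap p g) := by
  intro y
  constructor
  · intro hy
    choose x hx using fun i => (hfg (y i)).mp (congrFun hy i)
    exact ⟨x, funext hx⟩
  · rintro ⟨x, rfl⟩
    funext i
    exact (hfg ((pmap p f) x i)).mpr ⟨x i, rfl⟩

end pmap

section maps

noncomputable def iota0 (g h h' : Q) (hgh : h * h' = g) :
    (Q ⧸ (Ideal.span {h} : Ideal Q)) →ₗ[Q] (Q ⧸ (Ideal.span {g} : Ideal Q)) :=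
  Submodule.liftQ _ ((Ideal.span {g} : Ideal Q).mkQ ∘ₗ LinearMap.mulLeft Q h') (by
    intro x hx
    obtain ⟨b, hb⟩ := Ideal.mem_span_singleton'.mp hx
    simp only [LinearMap.mem_ker, LinearMap.comp_apply, LinearMap.mulLeft_apply,
      Submodule.mkQ_apply, Submodule.Quotient.mk_eq_zero]
    exact Ideal.mem_span_singleton'.mpr ⟨b, by rw [← hb, ← hgh]; ring⟩)

@[simp] lemma iota0_mk (g h h' : Q) (hgh : h * h' = g) (x : Q) :
    iota0 g h h' hgh (Submodule.Quotient.mk x) = Submodule.Quotient.mk (h' * x) := rfl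

noncomputable def psi0 (g h : Q) :
    (Q ⧸ (Ideal.span {g} : Ideal Q)) →ₗ[Q] (Q ⧸ (Ideal.span {g} : Ideal Q)) :=
  Submodule.liftQ _ ((Ideal.span {g} : Ideal Q).mkQ ∘ₗ LinearMap.mulLeft Q h) (by
    intro x hx
    simp only [LinearMap.mem_ker, LinearMap.comp_apply, LinearMap.mulLeft_apply,
      Submodule.mkQ_apply, Submodule.Quotient.mk_eq_zero]
    exact Ideal.mul_mem_left _ h hx)

@[simp] lemma psi0_mk (g h : Q) (x : Q) :
    psi0 g h (Submodule.Quotient.mk x) = Submodule.Quotient.mk (h * x) := rfl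

noncomputable def pi0 (g h : Q) (hle : (Ideal.span {g} : Ideal Q) ≤ Ideal.span {h}) :
    (Q ⧸ (Ideal.span {g} : Ideal Q)) →ₗ[Q] (Q ⧸ (Ideal.span {h} : Ideal Q)) :=
  Submodule.liftQ _ (Ideal.span {h} : Ideal Q).mkQ (by rwa [Submodule.ker_mkQ])

@[simp] lemma pi0_mk (g h : Q) (hle : (Ideal.span {g} : Ideal Q) ≤ Ideal.span {h}) (x : Q) :
    pi0 g h hle (Submodule.Quotient.mk x) = Submodule.Quotient.mk x := rfl

lemma iota0_injective {g h h' : Q} (hgh : h * h' = g)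
    (h'reg : ∀ x : Q, h' * x = 0 → x = 0) :
    Function.Injective (iota0 g h h' hgh) := by
  rw [injective_iff_map_eq_zero]
  intro z hz
  obtain ⟨x, rfl⟩ := Submodule.mkQ_surjective _ z
  rw [Submodule.mkQ_apply, iota0_mk, Submodule.Quotient.mk_eq_zero] at hz
  obtain ⟨b, hb⟩ := Ideal.mem_span_singleton'.mp hz
  have h2 : h' * (x - b * h) = 0 := by
    have : h' * x = b * g := hb.symm
    rw [mul_sub, this, ← hgh]; ring
  have h3 : x = b * h := sub_eq_zero.mp (h'reg _ h2)
  rw [Submodule.mkQ_apply, Submodule.Quotient.mk_eq_zero]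
  exact Ideal.mem_span_singleton'.mpr ⟨b, h3.symm⟩

lemma exact_iota0_psi0 {g h h' : Q} (hgh : h * h' = g)
    (hreg : ∀ x : Q, h * x = 0 → x = 0) :
    Function.Exact (iota0 g h h' hgh) (psi0 g h) := by
  intro y
  obtain ⟨x, rfl⟩ := Submodule.mkQ_surjective _ y
  rw [Submodule.mkQ_apply]
  constructor
  · intro hy
    rw [psi0_mk, Submodule.Quotient.mk_eq_zero] at hy
    obtain ⟨b, hb⟩ := Ideal.mem_span_singleton'.mp hy
    have h2 : h * (x - b * h') = 0 := by
      have : h * x = b * g := hb.symm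
      rw [mul_sub, this, ← hgh]; ring
    have h3 : x = b * h' := sub_eq_zero.mp (hreg _ h2)
    refine ⟨Submodule.Quotient.mk b, ?_⟩
    rw [iota0_mk, h3, mul_comm]
  · rintro ⟨z, hz⟩
    obtain ⟨w, rfl⟩ := Submodule.mkQ_surjective _ z
    rw [Submodule.mkQ_apply, iota0_mk] at hz
    rw [← hz, psi0_mk, Submodule.Quotient.mk_eq_zero]
    exact Ideal.mem_span_singleton'.mpr ⟨w, by rw [← hgh]; ring⟩

lemma exact_psi0_pi0 {g h : Q} (hle : (Ideal.span {g} : Ideal Q) ≤ Ideal.span {h}) :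
    Function.Exact (psi0 g h) (pi0 g h hle) := by
  intro y
  obtain ⟨x, rfl⟩ := Submodule.mkQ_surjective _ y
  rw [Submodule.mkQ_apply]
  constructor
  · intro hy
    rw [pi0_mk, Submodule.Quotient.mk_eq_zero] at hy
    obtain ⟨b, hb⟩ := Ideal.mem_span_singleton'.mp hy
    refine ⟨Submodule.Quotient.mk b, ?_⟩
    rw [psi0_mk, ← hb, mul_comm]
  · rintro ⟨z, hz⟩
    obtain ⟨w, rfl⟩ := Submodule.mkQ_surjective _ z
    rw [Submodule.mkQ_apply, psi0_mk] at hz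
    rw [← hz, pi0_mk, Submodule.Quotient.mk_eq_zero]
    exact Ideal.mem_span_singleton'.mpr ⟨w, mul_comm _ _⟩

lemma pi0_surjective {g h : Q} (hle : (Ideal.span {g} : Ideal Q) ≤ Ideal.span {h}) :
    Function.Surjective (pi0 g h hle) := by
  intro y
  obtain ⟨x, rfl⟩ := Submodule.mkQ_surjective _ y
  exact ⟨Submodule.Quotient.mk x, rfl⟩

end maps

end Stmt8Aux

open Stmt8Aux



/-- A standard graded `k`-algebra structure on `R`, recorded via a family of
`k`-submodules `𝒜 j` (the graded components): `R = ⊕ 𝒜 j`, `𝒜 j = 0` for `j < 0`,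
`𝒜 0 = k·1`, `R` is generated in degree one, and all components are finite dimensional. -/
structure IsStandardGraded (k : Type*) [Field k] (R : Type*) [CommRing R] [Algebra k R]
    (𝒜 : ℤ → Submodule k R) : Prop where
  internal : DirectSum.IsInternal 𝒜
  one_mem : (1 : R) ∈ 𝒜 0
  mul_mem : ∀ ⦃i j : ℤ⦄ ⦃x y : R⦄, x ∈ 𝒜 i → y ∈ 𝒜 j → x * y ∈ 𝒜 (i + j)
  bot_of_neg : ∀ i : ℤ, i < 0 → 𝒜 i = ⊥
  deg_zero : 𝒜 0 = Submodule.span k {(1 : R)}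
  gen_in_deg_one : ∀ i : ℤ, 0 ≤ i → 𝒜 (i + 1) = 𝒜 1 * 𝒜 i
  finite_dim : ∀ i : ℤ, FiniteDimensional k (𝒜 i)

/-- A grading on an `R`-module `M` compatible with a grading `𝒜` on `R`,
with finite-dimensional components. -/
structure IsGradedModule (k : Type*) [Field k] (R : Type*) [CommRing R] [Algebra k R]
    (𝒜 : ℤ → Submodule k R) (M : Type*) [AddCommGroup M] [Module R M] [Module k M]
    [IsScalarTower k R M] (ℳ : ℤ → Submodule k M) : Prop where
  internal : DirectSum.IsInternal ℳ
  smul_mem : ∀ ⦃i j : ℤ⦄ ⦃x : R⦄ ⦃m : M⦄, x ∈ 𝒜 i → m ∈ ℳ j → x • m ∈ ℳ (i + j)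
  finite_dim : ∀ j : ℤ, FiniteDimensional k (ℳ j)

/-- A linear (minimal, degree-`d`) free resolution of the graded `R`-module `M`:
an exact complex `⋯ → R(−d−n−1)^{β (n+1)} → R(−d−n)^{β n} → ⋯ → R(−d)^{β 0} → M → 0`
in which every differential is given by a matrix with entries in `R₁ = 𝒜 1`, and the
generators of the `n`-th free module map to degree `d + n`. Its existence says exactly
that `M` is a linear module with `indeg M = d` (a Koszul module when `d = 0`). -/
structure LinearResolution (k : Type*) [Field k] (R : Type*) [CommRing R] [Algebra k R]
    (𝒜 : ℤ → Submodule k R) (M : Type*) [AddCommGroup M] [Module R M] [Module k M]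
    [IsScalarTower k R M] (ℳ : ℤ → Submodule k M) (d : ℤ) where
  β : ℕ → ℕ
  dd : ∀ n : ℕ, (Fin (β (n + 1)) → R) →ₗ[R] (Fin (β n) → R)
  aug : (Fin (β 0) → R) →ₗ[R] M
  aug_surjective : Function.Surjective aug
  aug_deg : ∀ i, aug (Pi.single i 1) ∈ ℳ d
  dd_linear : ∀ (n : ℕ) (i : Fin (β (n + 1))) (j : Fin (β n)),
    dd n (Pi.single i 1) j ∈ 𝒜 1
  exact_aug : Function.Exact (dd 0) aug
  exact_dd : ∀ n : ℕ, Function.Exact (dd (n + 1)) (dd n)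

/-- `R` is a Koszul algebra: the residue field `k = R/R₊ = R/(R₁)` has a linear
free resolution over `R`. -/
def IsKoszulAlgebra (k : Type*) [Field k] (R : Type*) [CommRing R] [Algebra k R]
    (𝒜 : ℤ → Submodule k R) : Prop :=
  Nonempty (LinearResolution k R 𝒜 (R ⧸ Ideal.span (𝒜 1 : Set R))
    (fun j => (𝒜 j).map ((Ideal.span (𝒜 1 : Set R)).mkQ.restrictScalars k)) 0)

/-- last part of Corollary 3.3: let `R = Q/(g)` with `g ∈ Q₂` a
non-zero-divisor and `H_R(s) = (1+(e−1)s)(1+s)` (stated coefficientwise for the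
induced grading on `Q/(g)`). If `h ∈ Q₁` is a non-zero-divisor, then
`N = (Q/hQ)^p` satisfies `H_N(s) = p(1+(e−1)s)`, and `N` admits a
periodic-of-period-2 linear resolution over `R`:
`0 → N(−2) → R^p(−1) → R^p → N → 0`; in particular the linear locus
`L_{p,(e−1)p}(R)` is nonempty. -/
theorem stmt8 {k Q : Type*} [Field k] [CommRing Q] [Algebra k Q]
    (𝒜 : ℤ → Submodule k Q) (hQ : IsStandardGraded k Q 𝒜)
    (g : Q) (hg2 : g ∈ 𝒜 2) (hgreg : ∀ x : Q, g * x = 0 → x = 0)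
    (e : ℕ) (he2 : 2 ≤ e)
    (hR0 : Module.finrank k ((𝒜 0).map
      (((Ideal.span {g} : Ideal Q).mkQ).restrictScalars k)) = 1)
    (hR1 : Module.finrank k ((𝒜 1).map
      (((Ideal.span {g} : Ideal Q).mkQ).restrictScalars k)) = e)
    (hR2 : Module.finrank k ((𝒜 2).map
      (((Ideal.span {g} : Ideal Q).mkQ).restrictScalars k)) = e - 1)
    (hR3 : ∀ j : ℤ, 3 ≤ j → (𝒜 j).map
      (((Ideal.span {g} : Ideal Q).mkQ).restrictScalars k) = ⊥)
    (h : Q) (hh1 : h ∈ 𝒜 1) (hhreg : ∀ x : Q, h * x = 0 → x = 0)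
    (p : ℕ) (hp : 1 ≤ p) :
    -- Hilbert series of N = (Q/hQ)^p : H_N(s) = p + (e−1)p s
    (Module.finrank k (Submodule.pi Set.univ (fun _ : Fin p =>
        (𝒜 0).map (((Ideal.span {h} : Ideal Q).mkQ).restrictScalars k))) = p) ∧
    (Module.finrank k (Submodule.pi Set.univ (fun _ : Fin p =>
        (𝒜 1).map (((Ideal.span {h} : Ideal Q).mkQ).restrictScalars k))) = (e - 1) * p) ∧
    (∀ j : ℤ, j ≠ 0 → j ≠ 1 →
      Submodule.pi Set.univ (fun _ : Fin p =>
        (𝒜 j).map (((Ideal.span {h} : Ideal Q).mkQ).restrictScalars k)) = ⊥) ∧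
    -- N is linear of period 2 over R = Q/(g):
    -- an exact sequence 0 → N(−2) → R^p(−1) → R^p → N → 0 of (Q-linear maps of)
    -- R-modules, with the middle map given by a matrix of linear forms.
    ∃ (ι : (Fin p → Q ⧸ Ideal.span {h}) →ₗ[Q] (Fin p → Q ⧸ Ideal.span {g}))
      (ψ : (Fin p → Q ⧸ Ideal.span {g}) →ₗ[Q] (Fin p → Q ⧸ Ideal.span {g}))
      (π : (Fin p → Q ⧸ Ideal.span {g}) →ₗ[Q] (Fin p → Q ⧸ Ideal.span {h})),
      Function.Injective ι ∧ Function.Surjective π ∧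
      Function.Exact ι ψ ∧ Function.Exact ψ π ∧
      (∀ (j : ℤ),
        ∀ n ∈ Submodule.pi Set.univ (fun _ : Fin p =>
          (𝒜 j).map (((Ideal.span {h} : Ideal Q).mkQ).restrictScalars k)),
        ∀ i : Fin p, ι n i ∈ (𝒜 (j + 1)).map
          (((Ideal.span {g} : Ideal Q).mkQ).restrictScalars k)) ∧
      (∀ (i j : Fin p), ψ (Pi.single i 1) j ∈ (𝒜 1).map
          (((Ideal.span {g} : Ideal Q).mkQ).restrictScalars k)) ∧
      (∀ i : Fin p, π (Pi.single i 1) ∈ Submodule.pi Set.univ (fun _ : Fin p =>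
          (𝒜 0).map (((Ideal.span {h} : Ideal Q).mkQ).restrictScalars k))) := by
  classical
  have hint := hQ.internal
  have hm := hQ.mul_mem
  have hfd := hQ.finite_dim
  have hdneg : ∀ j : ℤ, j < 0 → Module.finrank k (𝒜 j) = 0 := by
    intro j hj; rw [hQ.bot_of_neg j hj]; exact finrank_bot k Q
  have hgq := fun j => finrank_map_quot 𝒜 hint hm hfd hg2 hgreg j
  have hhq := fun j => finrank_map_quot 𝒜 hint hm hfd hh1 hhreg j
  have d0 : Module.finrank k (𝒜 0) = 1 := by
    have h1 := hgq 0; rw [hR0] at h1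
    have h2 := hdneg (0 - 2) (by norm_num); omega
  have d1 : Module.finrank k (𝒜 1) = e := by
    have h1 := hgq 1; rw [hR1] at h1
    have h2 := hdneg (1 - 2) (by norm_num); omega
  have d2 : Module.finrank k (𝒜 2) = e := by
    have h1 := hgq 2; rw [hR2] at h1
    rw [show (2:ℤ) - 2 = 0 from by norm_num, d0] at h1; omega
  have dstep : ∀ j : ℤ, 3 ≤ j → Module.finrank k (𝒜 j) = Module.finrank k (𝒜 (j - 2)) := by
    intro j hj
    have h1 := hgq j
    rw [hR3 j hj] at h1
    rw [finrank_bot] at h1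
    omega
  have dpos : ∀ j : ℤ, 1 ≤ j → Module.finrank k (𝒜 j) = e := by
    have key : ∀ n : ℕ, Module.finrank k (𝒜 (1 + n)) = e := by
      intro n
      induction n using Nat.strong_induction_on with
      | _ n ih =>
        match n with
        | 0 => simpa using d1
        | 1 => rw [show (1 + ((1:ℕ):ℤ)) = 2 from by norm_num]; exact d2
        | (m+2) =>
          have h3 := dstep (1 + ((m+2:ℕ):ℤ)) (by push_cast; omega)
          rw [show (1 + ((m+2:ℕ):ℤ)) - 2 = 1 + (m:ℤ) from by push_cast; ring] at h3
          rw [h3]; exact ih m (by omega)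
    intro j hj
    have hk := key (j - 1).toNat
    rwa [show (1 + (((j-1).toNat) : ℤ)) = j from by omega] at hk
  have hH0 : Module.finrank k ((𝒜 0).map
      (((Ideal.span {h} : Ideal Q).mkQ).restrictScalars k)) = 1 := by
    have h1 := hhq 0
    have h2 := hdneg (0 - 1) (by norm_num)
    omega
  have hH1 : Module.finrank k ((𝒜 1).map
      (((Ideal.span {h} : Ideal Q).mkQ).restrictScalars k)) = e - 1 := by
    have h1 := hhq 1
    rw [show (1:ℤ) - 1 = 0 from by norm_num, d0, d1] at h1
    omega
  have hHbot : ∀ j : ℤ, j ≠ 0 → j ≠ 1 →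
      (𝒜 j).map (((Ideal.span {h} : Ideal Q).mkQ).restrictScalars k) = ⊥ := by
    intro j hj0 hj1
    rcases lt_or_ge j 0 with hneg | hpos
    · rw [hQ.bot_of_neg j hneg, Submodule.map_bot]
    · have h1 := hhq j
      rw [dpos j (by omega), dpos (j-1) (by omega)] at h1
      have hz : Module.finrank k ((𝒜 j).map
          (((Ideal.span {h} : Ideal Q).mkQ).restrictScalars k)) = 0 := by omega
      haveI := hfd j
      haveI : Module.Finite k ((𝒜 j).map
          (((Ideal.span {h} : Ideal Q).mkQ).restrictScalars k)) := Module.Finite.map _ _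
      exact Submodule.finrank_eq_zero.mp hz
  have hg_mem : g ∈ (Ideal.span {h} : Ideal Q) := by
    have hbot := hHbot 2 (by norm_num) (by norm_num)
    have hmem : (((Ideal.span {h} : Ideal Q).mkQ).restrictScalars k) g ∈
        (𝒜 2).map (((Ideal.span {h} : Ideal Q).mkQ).restrictScalars k) :=
      Submodule.mem_map_of_mem hg2
    rw [hbot, Submodule.mem_bot] at hmem
    exact (Submodule.Quotient.mk_eq_zero _).mp hmem
  obtain ⟨a, ha⟩ := Ideal.mem_span_singleton'.mp hg_mem
  have hha : h * a ∈ 𝒜 2 := by rw [mul_comm, ha]; exact hg2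
  have hgh' : h * comp 𝒜 hint 1 a = g := by
    have h1 : comp 𝒜 hint 2 (h * a) = h * a := comp_of_mem 𝒜 hint hha
    have h2 := comp_mul 𝒜 hint hm hh1 2 a
    rw [h1] at h2
    rw [show (2:ℤ) - 1 = 1 from by norm_num] at h2
    rw [← h2, mul_comm]; exact ha
  set h' := comp 𝒜 hint 1 a with hh'def
  have hh'1 : h' ∈ 𝒜 1 := comp_mem 𝒜 hint 1 a
  have h'reg : ∀ x : Q, h' * x = 0 → x = 0 := by
    intro x hx
    apply hgreg
    rw [← hgh', mul_assoc, hx, mul_zero]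
  have hle : (Ideal.span {g} : Ideal Q) ≤ Ideal.span {h} := by
    rw [Ideal.span_le, Set.singleton_subset_iff]; exact hg_mem
  refine ⟨?_, ?_, ?_, ?_⟩
  · haveI := hfd 0
    haveI : Module.Finite k ((𝒜 0).map
        (((Ideal.span {h} : Ideal Q).mkQ).restrictScalars k)) := Module.Finite.map _ _
    rw [finrank_pi_submodule, hH0, mul_one]
  · haveI := hfd 1
    haveI : Module.Finite k ((𝒜 1).map
        (((Ideal.span {h} : Ideal Q).mkQ).restrictScalars k)) := Module.Finite.map _ _
    rw [finrank_pi_submodule, hH1, mul_comm]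
  · intro j hj0 hj1
    simp only [hHbot j hj0 hj1]
    exact pi_eq_bot p
  · refine ⟨pmap p (iota0 g h h' hgh'), pmap p (psi0 g h), pmap p (pi0 g h hle),
      pmap_injective (iota0_injective hgh' h'reg),
      pmap_surjective (pi0_surjective hle),
      pmap_exact (exact_iota0_psi0 hgh' hhreg),
      pmap_exact (exact_psi0_pi0 hle), ?_, ?_, ?_⟩
    · intro j n hn i
      obtain ⟨x, hx, hxe⟩ := Submodule.mem_map.mp (hn i (Set.mem_univ i))
      refine Submodule.mem_map.mpr ⟨h' * x, ?_, ?_⟩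
      · have hmm := hm hh'1 hx; rwa [add_comm] at hmm
      · rw [pmap_apply, ← hxe]
        rfl
    · intro i j
      rw [pmap_apply]
      rcases eq_or_ne j i with rfl | hne
      · rw [Pi.single_eq_same]
        refine Submodule.mem_map.mpr ⟨h, hh1, ?_⟩
        have h1 : (1 : Q ⧸ (Ideal.span {g} : Ideal Q)) = Submodule.Quotient.mk 1 := rfl
        rw [h1, psi0_mk, mul_one]
        rfl
      · rw [Pi.single_eq_of_ne hne, map_zero]
        exact Submodule.zero_mem _
    · intro i
      rw [Submodule.mem_pi]
      intro i' _
      rw [pmap_apply]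
      rcases eq_or_ne i' i with rfl | hne
      · rw [Pi.single_eq_same]
        refine Submodule.mem_map.mpr ⟨1, hQ.one_mem, ?_⟩
        have h1 : (1 : Q ⧸ (Ideal.span {g} : Ideal Q)) = Submodule.Quotient.mk 1 := rfl
        rw [h1, pi0_mk]
        rfl
      · rw [Pi.single_eq_of_ne hne, map_zero]
        exact Submodule.zero_mem _
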